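/- Let R be a commutative ring and T a ℤ-indexed acyclic cochain complex of finitely generated free R-modules with differential ∂. Let M = coker(∂^{−1} : T^{−1} → T⁰), regarded as a cochain complex concentrated in degree 0, let ρ⁰ : T⁰ → M be the canonical projection, and let i : M → T[1] be the morphism of complexes whose degree-0 component M → T¹ is the unique map satisfying i ∘ ρ⁰ = ∂⁰. Then for every ℤ-indexed acyclic cochain complex I of injective R-modules, the induced map of total Hom complexes Hom•(T[1], I) → Hom•(M, I) is a quasi-isomorphism. -/

import Mathlib

open CategoryTheory CategoryTheory.Limits

universe u

namespace CokMapAux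

variable {R : Type u} [CommRing R]

lemma exists_extend {X Y W : ModuleCat.{u} R} (u : X ⟶ Y) (v : X ⟶ W)
    [Injective W] (h : LinearMap.ker u.hom ≤ LinearMap.ker v.hom) :
    ∃ w : Y ⟶ W, ∀ x : X, w (u x) = v x := by
  set S := LinearMap.range u.hom with hS
  let e : (X ⧸ LinearMap.ker u.hom) ≃ₗ[R] S := u.hom.quotKerEquivRange
  let v' : ModuleCat.of R S ⟶ W := ModuleCat.ofHom ((Submodule.liftQ (LinearMap.ker u.hom) v.hom h).comp
    (e.symm : S →ₗ[R] (X ⧸ LinearMap.ker u.hom)))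
  let sub : ModuleCat.of R S ⟶ Y := ModuleCat.ofHom S.subtype
  haveI : Mono sub := (ModuleCat.mono_iff_injective _).mpr (Submodule.injective_subtype S)
  refine ⟨Injective.factorThru v' sub, fun x => ?_⟩
  have h1 : Injective.factorThru v' sub (sub ⟨u x, ⟨x, rfl⟩⟩) = v' ⟨u x, ⟨x, rfl⟩⟩ := by
    have := Injective.comp_factorThru v' sub
    exact congrFun (congrArg (fun (p : ModuleCat.of R S ⟶ W) => (p : S → W)) this) ⟨u x, ⟨x, rfl⟩⟩
  have h2 : e.symm ⟨u x, ⟨x, rfl⟩⟩ = Submodule.Quotient.mk x := by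
    rw [LinearEquiv.symm_apply_eq]
    exact Subtype.ext (LinearMap.quotKerEquivRange_apply_mk u.hom x).symm
  have h3 : v' ⟨u x, ⟨x, rfl⟩⟩ = v x := by
    show (Submodule.liftQ (LinearMap.ker u.hom) v.hom h) (e.symm ⟨u x, ⟨x, rfl⟩⟩) = v x
    rw [h2, Submodule.liftQ_apply]
  exact h1.trans h3

/-- Lift `p` through `q` when `range p ≤ range q`, source projective. -/
lemma exists_lift {P Y W : ModuleCat.{u} R} (p : P ⟶ Y) (q : W ⟶ Y)
    (hP : Module.Projective R P) (h : LinearMap.range p.hom ≤ LinearMap.range q.hom) :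
    ∃ l : P ⟶ W, ∀ x : P, q (l x) = p x := by
  let q' : W →ₗ[R] LinearMap.range q.hom := q.hom.rangeRestrict
  let p' : P →ₗ[R] LinearMap.range q.hom :=
    p.hom.codRestrict (LinearMap.range q.hom) (fun x => h ⟨x, rfl⟩)
  obtain ⟨l, hl⟩ := Module.projective_lifting_property q' p' (LinearMap.surjective_rangeRestrict q.hom)
  refine ⟨ModuleCat.ofHom l, fun x => ?_⟩
  have := congrFun (congrArg (fun (m : P →ₗ[R] LinearMap.range q.hom) => (m : P → LinearMap.range q.hom)) hl) x
  exact congrArg Subtype.val this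


section IntRec
variable {D : ℤ → Sort*} {Rel : ∀ i : ℤ, D i → D (i + 1) → Prop}

/-- Positive part. -/
noncomputable def posSeq (z : D 0) (up : ∀ i, (x : D i) → {y : D (i + 1) // Rel i x y}) :
    ∀ k : ℕ, D (Int.ofNat k)
  | 0 => z
  | (k + 1) => (up (Int.ofNat k) (posSeq z up k)).1

/-- Negative part. -/
noncomputable def negSeq (z : D 0) (down : ∀ i, (y : D (i + 1)) → {x : D i // Rel i x y}) :
    ∀ k : ℕ, D (Int.negSucc k)
  | 0 => (down (Int.negSucc 0) z).1
  | (k + 1) => (down (Int.negSucc (k + 1)) (negSeq z down k)).1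

/-- Glued two-sided sequence. -/
noncomputable def glueSeq (z : D 0) (up : ∀ i, (x : D i) → {y : D (i + 1) // Rel i x y})
    (down : ∀ i, (y : D (i + 1)) → {x : D i // Rel i x y}) : ∀ i : ℤ, D i
  | Int.ofNat k => posSeq z up k
  | Int.negSucc k => negSeq z down k

lemma glueSeq_zero (z : D 0) (up : ∀ i, (x : D i) → {y : D (i + 1) // Rel i x y})
    (down : ∀ i, (y : D (i + 1)) → {x : D i // Rel i x y}) :
    glueSeq z up down 0 = z := rfl

lemma glueSeq_rel (z : D 0) (up : ∀ i, (x : D i) → {y : D (i + 1) // Rel i x y})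
    (down : ∀ i, (y : D (i + 1)) → {x : D i // Rel i x y}) :
    ∀ i : ℤ, Rel i (glueSeq z up down i) (glueSeq z up down (i + 1))
  | Int.ofNat k => (up (Int.ofNat k) (posSeq z up k)).2
  | Int.negSucc 0 => (down (Int.negSucc 0) z).2
  | Int.negSucc (k + 1) => (down (Int.negSucc (k + 1)) (negSeq z down k)).2


end IntRec

lemma range_d_eq_ker (K : CochainComplex (ModuleCat.{u} R) ℤ) (hK : ∀ i, K.ExactAt i)
    (i j k : ℤ) (hij : i + 1 = j) (hjk : j + 1 = k) :
    LinearMap.range (K.d i j).hom = LinearMap.ker (K.d j k).hom := by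
  have h := (HomologicalComplex.exactAt_iff' K i j k
    (by rw [CochainComplex.prev]; omega) (by rw [CochainComplex.next]; omega)).mp (hK j)
  exact (ShortComplex.moduleCat_exact_iff_range_eq_ker _).mp h

lemma shift_smul_apply (K : CochainComplex (ModuleCat.{u} R) ℤ) (n i j : ℤ) (x : K.X (i + n)) :
    (K⟦n⟧).d i j x = (n.negOnePow : ℤ) • (K.d (i + n) (j + n) x) := rfl

lemma shift_ker (K : CochainComplex (ModuleCat.{u} R) ℤ) (n j k : ℤ) :
    LinearMap.ker ((K⟦n⟧).d j k).hom = LinearMap.ker (K.d (j + n) (k + n)).hom := by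
  ext b
  simp only [LinearMap.mem_ker]
  rw [show ((K⟦n⟧).d j k) b = (n.negOnePow : ℤ) • (K.d (j + n) (k + n) b) from rfl]
  rcases Int.units_eq_one_or n.negOnePow with h | h <;> rw [h]
  · simp; exact Iff.rfl
  · simp; exact neg_eq_zero

lemma shift_range (K : CochainComplex (ModuleCat.{u} R) ℤ) (n i j : ℤ) :
    LinearMap.range ((K⟦n⟧).d i j).hom = LinearMap.range (K.d (i + n) (j + n)).hom := by
  ext b
  simp only [LinearMap.mem_range]
  constructor
  · rintro ⟨a, rfl⟩
    refine ⟨(n.negOnePow : ℤ) • a, ?_⟩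
    rw [show ((K⟦n⟧).d i j) a = (n.negOnePow : ℤ) • (K.d (i + n) (j + n) a) from rfl]
    exact map_zsmul (K.d (i + n) (j + n)).hom _ _
  · rintro ⟨a, rfl⟩
    refine ⟨(n.negOnePow : ℤ) • a, ?_⟩
    rw [show ((K⟦n⟧).d i j) ((n.negOnePow : ℤ) • a)
      = (n.negOnePow : ℤ) • (K.d (i + n) (j + n) ((n.negOnePow : ℤ) • a)) from rfl]
    rw [map_zsmul, smul_smul]
    rcases Int.units_eq_one_or n.negOnePow with h | h <;> rw [h] <;> simp

lemma shift_range_ker (K : CochainComplex (ModuleCat.{u} R) ℤ) (hK : ∀ i, K.ExactAt i) (n : ℤ) :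
    ∀ i j k : ℤ, i + 1 = j → j + 1 = k →
      LinearMap.range ((K⟦n⟧).d i j).hom = LinearMap.ker ((K⟦n⟧).d j k).hom := by
  intro i j k hij hjk
  rw [shift_range, shift_ker]
  exact range_d_eq_ker K hK (i + n) (j + n) (k + n) (by omega) (by omega)


lemma d_d_apply (K : CochainComplex (ModuleCat.{u} R) ℤ) (i j k : ℤ) (x : K.X i) :
    K.d j k (K.d i j x) = 0 := by
  have h := congrArg (fun (m : K.X i ⟶ K.X k) => (m : K.X i → K.X k)) (K.d_comp_d i j k)
  exact congrFun h x

lemma hom_comm_apply {A B : CochainComplex (ModuleCat.{u} R) ℤ} (g : A ⟶ B) (i j : ℤ)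
    (x : A.X i) : B.d i j (g.f i x) = g.f j (A.d i j x) := by
  have h := congrArg (fun (m : A.X i ⟶ B.X j) => (m : A.X i → B.X j)) (g.comm i j)
  exact congrFun h x


lemma xiso_xiso_apply (B : CochainComplex (ModuleCat.{u} R) ℤ) {i j : ℤ} (e : i = j)
    (e' : j = i) (x : B.X i) : (B.XIsoOfEq e').hom ((B.XIsoOfEq e).hom x) = x := by
  subst e; rfl

lemma xiso_d_apply (B : CochainComplex (ModuleCat.{u} R) ℤ) {i j : ℤ} (e : i = j) (k : ℤ)
    (x : B.X i) : B.d j k ((B.XIsoOfEq e).hom x) = B.d i k x := by subst e; rfl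


section Main
variable (A B M : CochainComplex (ModuleCat.{u} R) ℤ) (ι : M ⟶ A)


theorem exists_chainMap_lift
    (hexA : ∀ i j k : ℤ, i + 1 = j → j + 1 = k →
      LinearMap.range (A.d i j).hom = LinearMap.ker (A.d j k).hom)
    (hexB : ∀ i j k : ℤ, i + 1 = j → j + 1 = k →
      LinearMap.range (B.d i j).hom = LinearMap.ker (B.d j k).hom)
    (hprojA : ∀ i, Module.Projective R (A.X i))
    (hinjB : ∀ i, Injective (B.X i))
    (hM : ∀ i : ℤ, i ≠ 0 → IsZero (M.X i))
    (hmono : Function.Injective (ι.f 0))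
    (hrange : LinearMap.range (ι.f 0).hom = LinearMap.ker (A.d 0 (0 + 1)).hom)
    (f : M ⟶ B) : ∃ g : A ⟶ B, ι ≫ g = f := by
  classical
  set φ : M.X 0 ⟶ B.X 0 := f.f 0 with hφdef
  have hMd : M.d 0 (0 + 1) = 0 := (hM (0 + 1) (by decide)).eq_of_tgt _ _
  have hφ : ∀ m : M.X 0, B.d 0 (0 + 1) (φ m) = 0 := by
    intro m
    have h1 := hom_comm_apply f 0 (0 + 1) m
    have h2 : M.d 0 (0 + 1) m = 0 := by rw [hMd]; rfl
    rw [h2, map_zero] at h1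
    exact h1
  -- the inductive data
  let D : ℤ → Type u := fun i => {h : A.X i ⟶ B.X i //
    ∀ a : A.X i, A.d i (i + 1) a = 0 → B.d i (i + 1) (h a) = 0}
  let Rel : ∀ i : ℤ, D i → D (i + 1) → Prop := fun i x y =>
    ∀ a : A.X i, y.1 (A.d i (i + 1) a) = B.d i (i + 1) (x.1 a)
  -- base
  haveI : Injective (B.X 0) := hinjB 0
  obtain ⟨w, hw⟩ := exists_extend (ι.f 0) φ (by
    rw [LinearMap.ker_eq_bot.mpr hmono]; exact bot_le)
  have hzQ : ∀ a : A.X 0, A.d 0 (0 + 1) a = 0 → B.d 0 (0 + 1) (w a) = 0 := by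
    intro a ha
    have : a ∈ LinearMap.range (ι.f 0).hom := by rw [hrange]; exact ha
    obtain ⟨m, rfl⟩ := this
    rw [hw m]; exact hφ m
  let z : D 0 := ⟨w, hzQ⟩
  -- up step
  have up : ∀ i, (x : D i) → {y : D (i + 1) // Rel i x y} := by
    intro i x
    haveI : Injective (B.X (i + 1)) := hinjB (i + 1)
    have h := exists_extend (A.d i (i + 1)) (x.1 ≫ B.d i (i + 1)) (by
      intro a ha
      have : B.d i (i + 1) (x.1 a) = 0 := x.2 a ha
      simpa [LinearMap.mem_ker] using this)
    refine ⟨⟨h.choose, ?_⟩, fun a => (h.choose_spec a).trans rfl⟩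
    · intro a ha
      have : a ∈ LinearMap.range (A.d i (i + 1)).hom := by
        rw [hexA i (i + 1) (i + 1 + 1) rfl rfl]; exact ha
      obtain ⟨b, rfl⟩ := this
      rw [h.choose_spec b]
      show B.d (i + 1) (i + 1 + 1) (B.d i (i + 1) (x.1 b)) = 0
      exact d_d_apply B i (i + 1) (i + 1 + 1) _
  -- down step
  have down : ∀ i, (y : D (i + 1)) → {x : D i // Rel i x y} := by
    intro i y
    have h := exists_lift (A.d i (i + 1) ≫ y.1) (B.d i (i + 1)) (hprojA i) (by
      rintro b ⟨a, rfl⟩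
      rw [hexB i (i + 1) (i + 1 + 1) rfl rfl]
      show B.d (i + 1) (i + 1 + 1) (y.1 (A.d i (i + 1) a)) = 0
      exact y.2 _ (d_d_apply A i i.succ _ a))
    refine ⟨⟨h.choose, ?_⟩, fun a => (h.choose_spec a).symm⟩
    · intro a ha
      have := h.choose_spec a
      show B.d i (i + 1) (h.choose a) = 0
      rw [this]
      show y.1 (A.d i (i + 1) a) = 0
      rw [ha, map_zero]
  -- glue
  let H := glueSeq z up down
  have hrel := glueSeq_rel z up down
  refine ⟨{ f := fun i => (H i).1, comm' := ?_ }, ?_⟩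
  · intro i j hij
    obtain rfl : i + 1 = j := hij
    ext a
    exact ((hrel i) a).symm
  · apply HomologicalComplex.hom_ext
    intro n
    by_cases hn : n = 0
    · subst hn
      show ι.f 0 ≫ (H 0).1 = f.f 0
      have h0 : H 0 = z := glueSeq_zero z up down
      rw [h0]
      ext m
      exact hw m
    · exact (hM n hn).eq_of_src _ _
theorem homotopy_zero
    (hexA : ∀ i j k : ℤ, i + 1 = j → j + 1 = k →
      LinearMap.range (A.d i j).hom = LinearMap.ker (A.d j k).hom)
    (hexB : ∀ i j k : ℤ, i + 1 = j → j + 1 = k →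
      LinearMap.range (B.d i j).hom = LinearMap.ker (B.d j k).hom)
    (hprojA : ∀ i, Module.Projective R (A.X i))
    (hinjB : ∀ i, Injective (B.X i))
    (hM : ∀ i : ℤ, i ≠ 0 → IsZero (M.X i))
    (hmono : Function.Injective (ι.f 0))
    (hrange : LinearMap.range (ι.f 0).hom = LinearMap.ker (A.d 0 (0 + 1)).hom)
    (g : A ⟶ B) (γ : Homotopy (ι ≫ g) 0) : Nonempty (Homotopy g (0 : A ⟶ B)) := by
  classical
  -- pointwise consequence of the homotopy at degree 0
  have hbase : ∀ m : M.X 0, g.f 0 (ι.f 0 m) = B.d (0 - 1) 0 (γ.hom 0 (0 - 1) m) := by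
    intro m
    have hc := γ.comm 0
    rw [dNext_eq γ.hom (show (ComplexShape.up ℤ).Rel 0 (0 + 1) from rfl),
        prevD_eq γ.hom (show (ComplexShape.up ℤ).Rel (0 - 1) 0 by simp)] at hc
    have hpt := ConcreteCategory.congr_hom hc m
    have h1 : ((ι ≫ g).f 0) m = g.f 0 (ι.f 0 m) := rfl
    have h2 : M.d 0 (0 + 1) m = 0 := by
      rw [(hM (0 + 1) (by decide)).eq_of_tgt (M.d 0 (0 + 1)) 0]; rfl
    have hadd : (M.d 0 (0 + 1) ≫ γ.hom (0 + 1) 0 + γ.hom 0 (0 - 1) ≫ B.d (0 - 1) 0 +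
        (0 : M ⟶ B).f 0) m = γ.hom (0 + 1) 0 (M.d 0 (0 + 1) m) +
        B.d (0 - 1) 0 (γ.hom 0 (0 - 1) m) + 0 := rfl
    rw [h1, hadd, h2, map_zero, zero_add, add_zero] at hpt
    exact hpt
  -- inductive data
  let D : ℤ → Type u := fun j => {s : A.X j ⟶ B.X (j - 1) //
    ∀ a : A.X j, A.d j (j + 1) a = 0 → g.f j a = B.d (j - 1) j (s a)}
  let Rel : ∀ j : ℤ, D j → D (j + 1) → Prop := fun j x y =>
    ∀ a : A.X j, g.f j a = B.d (j - 1) j (x.1 a) +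
      (B.XIsoOfEq (show j + 1 - 1 = j by omega)).hom (y.1 (A.d j (j + 1) a))
  -- base
  haveI : Injective (B.X (0 - 1)) := hinjB (0 - 1)
  obtain ⟨s0, hs0⟩ := exists_extend (ι.f 0) (γ.hom 0 (0 - 1)) (by
    rw [LinearMap.ker_eq_bot.mpr hmono]; exact bot_le)
  have hzV : ∀ a : A.X 0, A.d 0 (0 + 1) a = 0 → g.f 0 a = B.d (0 - 1) 0 (s0 a) := by
    intro a ha
    have : a ∈ LinearMap.range (ι.f 0).hom := by rw [hrange]; exact ha
    obtain ⟨m, rfl⟩ := this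
    rw [hs0 m]; exact hbase m
  let z : D 0 := ⟨s0, hzV⟩
  -- up step
  have up : ∀ j, (x : D j) → {y : D (j + 1) // Rel j x y} := by
    intro j x
    haveI : Injective (B.X j) := hinjB j
    have h := exists_extend (A.d j (j + 1)) (g.f j - x.1 ≫ B.d (j - 1) j) (by
      intro a ha
      have hx := x.2 a ha
      show (g.f j - x.1 ≫ B.d (j - 1) j) a = 0
      have : (g.f j - x.1 ≫ B.d (j - 1) j) a = g.f j a - B.d (j - 1) j (x.1 a) := rfl
      rw [this, hx, sub_self])
    set t := h.choose with ht
    refine ⟨⟨t ≫ (B.XIsoOfEq (show j = j + 1 - 1 by omega)).hom, ?_⟩, ?_⟩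
    · -- V (j+1)
      intro a ha
      have : a ∈ LinearMap.range (A.d j (j + 1)).hom := by
        rw [hexA j (j + 1) (j + 1 + 1) rfl rfl]; exact ha
      obtain ⟨b, rfl⟩ := this
      show g.f (j + 1) (A.d j (j + 1) b) =
        B.d (j + 1 - 1) (j + 1) ((B.XIsoOfEq (show j = j + 1 - 1 by omega)).hom (t (A.d j (j + 1) b)))
      rw [xiso_d_apply B (show j = j + 1 - 1 by omega) (j + 1)]
      rw [h.choose_spec b]
      have hv : (g.f j - x.1 ≫ B.d (j - 1) j) b = g.f j b - B.d (j - 1) j (x.1 b) := rfl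
      rw [hv, map_sub]
      rw [hom_comm_apply g j (j + 1) b]
      have : B.d j (j + 1) (B.d (j - 1) j (x.1 b)) = 0 := d_d_apply B _ _ _ _
      rw [this, sub_zero]
    · -- Rel j
      intro a
      show g.f j a = B.d (j - 1) j (x.1 a) +
        (B.XIsoOfEq (show j + 1 - 1 = j by omega)).hom
          ((B.XIsoOfEq (show j = j + 1 - 1 by omega)).hom (t (A.d j (j + 1) a)))
      rw [xiso_xiso_apply B (show j = j + 1 - 1 by omega) (show j + 1 - 1 = j by omega)]
      rw [h.choose_spec a]
      have hv : (g.f j - x.1 ≫ B.d (j - 1) j) a = g.f j a - B.d (j - 1) j (x.1 a) := rfl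
      rw [hv]
      abel
  -- down step
  have down : ∀ j, (y : D (j + 1)) → {x : D j // Rel j x y} := by
    intro j y
    have h := exists_lift
      (g.f j - A.d j (j + 1) ≫ y.1 ≫ (B.XIsoOfEq (show j + 1 - 1 = j by omega)).hom)
      (B.d (j - 1) j) (hprojA j) (by
        rintro b ⟨a, rfl⟩
        rw [hexB (j - 1) j (j + 1) (by omega) rfl]
        show B.d j (j + 1) ((g.f j - A.d j (j + 1) ≫ y.1 ≫
          (B.XIsoOfEq (show j + 1 - 1 = j by omega)).hom) a) = 0
        have hv : (g.f j - A.d j (j + 1) ≫ y.1 ≫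
            (B.XIsoOfEq (show j + 1 - 1 = j by omega)).hom) a =
            g.f j a - (B.XIsoOfEq (show j + 1 - 1 = j by omega)).hom
              (y.1 (A.d j (j + 1) a)) := rfl
        rw [hv, map_sub]
        rw [xiso_d_apply B (show j + 1 - 1 = j by omega) (j + 1)]
        rw [hom_comm_apply g j (j + 1) a]
        have := y.2 (A.d j (j + 1) a) (d_d_apply A _ _ _ _)
        rw [this, sub_self])
    refine ⟨⟨h.choose, ?_⟩, ?_⟩
    · -- V j
      intro a ha
      have hs := h.choose_spec a
      have hv : (g.f j - A.d j (j + 1) ≫ y.1 ≫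
          (B.XIsoOfEq (show j + 1 - 1 = j by omega)).hom) a =
          g.f j a - (B.XIsoOfEq (show j + 1 - 1 = j by omega)).hom
            (y.1 (A.d j (j + 1) a)) := rfl
      rw [hv, ha, map_zero, map_zero, sub_zero] at hs
      exact hs.symm
    · -- Rel j
      intro a
      have hs := h.choose_spec a
      have hv : (g.f j - A.d j (j + 1) ≫ y.1 ≫
          (B.XIsoOfEq (show j + 1 - 1 = j by omega)).hom) a =
          g.f j a - (B.XIsoOfEq (show j + 1 - 1 = j by omega)).hom
            (y.1 (A.d j (j + 1) a)) := rfl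
      rw [hv] at hs
      show g.f j a = B.d (j - 1) j (h.choose a) +
        (B.XIsoOfEq (show j + 1 - 1 = j by omega)).hom (y.1 (A.d j (j + 1) a))
      rw [hs]
      abel
  -- glue
  let s := glueSeq z up down
  have hrel := glueSeq_rel z up down
  refine ⟨{
    hom := fun i j => if e : j = i - 1 then (s i).1 ≫ (B.XIsoOfEq e.symm).hom else 0
    zero := ?_
    comm := ?_ }⟩
  · intro i j hne
    dsimp only
    rw [dif_neg]
    intro e
    exact hne (by subst e; show (ComplexShape.up ℤ).Rel (i - 1) i; simp)
  · intro i
    dsimp only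
    rw [dNext_eq _ (show (ComplexShape.up ℤ).Rel i (i + 1) from rfl),
        prevD_eq _ (show (ComplexShape.up ℤ).Rel (i - 1) i by simp)]
    rw [dif_pos (show i - 1 = i - 1 from rfl), dif_pos (show i = i + 1 - 1 by omega)]
    have hzero : ((0 : A ⟶ B).f i) = 0 := rfl
    rw [hzero]
    ext a
    have hr := (hrel i) a
    show g.f i a = ((A.d i (i + 1) ≫ ((s (i + 1)).1 ≫
        (B.XIsoOfEq (show i = i + 1 - 1 by omega).symm).hom)) +
      (((s i).1 ≫ (B.XIsoOfEq (show i - 1 = i - 1 from rfl).symm).hom) ≫ B.d (i - 1) i) + 0) a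
    have h5 : ((A.d i (i + 1) ≫ ((s (i + 1)).1 ≫
        (B.XIsoOfEq (show i = i + 1 - 1 by omega).symm).hom)) +
      (((s i).1 ≫ (B.XIsoOfEq (show i - 1 = i - 1 from rfl).symm).hom) ≫ B.d (i - 1) i) + 0) a =
        (B.XIsoOfEq (show i = i + 1 - 1 by omega).symm).hom ((s (i + 1)).1 (A.d i (i + 1) a)) +
        B.d (i - 1) i ((B.XIsoOfEq (show i - 1 = i - 1 from rfl).symm).hom ((s i).1 a)) + 0 := rfl
    rw [h5]
    have h6 : (B.XIsoOfEq (show i - 1 = i - 1 from rfl).symm).hom ((s i).1 a) = (s i).1 a := rfl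
    rw [h6, add_zero, hr]
    abel

end Main
end CokMapAux

open CokMapAux

/-- **Universal property of the map from the cokernel to the shifted complex.**
Let `T` be a ℤ-indexed acyclic cochain complex of finitely generated free `R`-modules,
`M` the cokernel of `∂⁻¹ : T⁻¹ → T⁰` regarded as a complex concentrated in degree `0`
(via a surjection `ρ : T⁰ → M⁰` with kernel the image of `∂⁻¹`), and `ι : M ⟶ T⟦1⟧`
the morphism of complexes determined by `ρ ≫ ι⁰ = ∂⁰`.  Then for every acyclic cochain
complex `I` of injective `R`-modules, the induced map of total Hom complexes
`Hom•(T⟦1⟧, I) ⟶ Hom•(M, I)` is a quasi-isomorphism; equivalently, for every `n : ℤ`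
precomposition with `ι` is a bijection on homotopy classes of degree-`n` chain maps
(morphisms into `I⟦n⟧` in the homotopy category). -/
theorem precomposition_quasiIso_of_cokernel_map
    {R : Type u} [CommRing R]
    (T : CochainComplex (ModuleCat.{u} R) ℤ)
    (hfree : ∀ i : ℤ, Module.Free R (T.X i))
    (hfin : ∀ i : ℤ, Module.Finite R (T.X i))
    (hacyclic : ∀ i : ℤ, T.ExactAt i)
    (M : CochainComplex (ModuleCat.{u} R) ℤ)
    (hM : ∀ i : ℤ, i ≠ 0 → IsZero (M.X i))
    (ρ : T.X 0 ⟶ M.X 0)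
    (hρsurj : Function.Surjective ρ)
    (hρker : LinearMap.ker ρ.hom = LinearMap.range (T.d (-1) 0).hom)
    (ι : M ⟶ T⟦(1 : ℤ)⟧)
    (hι : ρ ≫ ι.f 0 = T.d 0 1) :
    ∀ (I : CochainComplex (ModuleCat.{u} R) ℤ),
      (∀ i : ℤ, I.ExactAt i) → (∀ i : ℤ, Injective (I.X i)) →
      ∀ n : ℤ, Function.Bijective
        (fun g : (HomotopyCategory.quotient (ModuleCat.{u} R) (ComplexShape.up ℤ)).obj
            (T⟦(1 : ℤ)⟧) ⟶
          (HomotopyCategory.quotient (ModuleCat.{u} R) (ComplexShape.up ℤ)).obj (I⟦n⟧) =>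
          (HomotopyCategory.quotient (ModuleCat.{u} R) (ComplexShape.up ℤ)).map ι ≫ g) := by
  intro I hIacyclic hIinj n
  -- hypotheses for the general lemmas, with `A := T⟦1⟧` and `B := I⟦n⟧`
  have hexA := shift_range_ker T hacyclic 1
  have hexB := shift_range_ker I hIacyclic n
  have hprojA : ∀ i : ℤ, Module.Projective R ((T⟦(1 : ℤ)⟧).X i) := by
    intro i
    haveI := hfree (i + 1)
    exact (Module.Projective.of_free : Module.Projective R (T.X (i + 1)))
  have hinjB : ∀ i : ℤ, Injective ((I⟦n⟧).X i) := fun i =>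
    (hIinj (i + n) : Injective (I.X (i + n)))
  have hTex := range_d_eq_ker T hacyclic
  have hιρ : ∀ x : T.X 0, ι.f 0 (ρ x) = T.d 0 1 x := fun x => ConcreteCategory.congr_hom hι x
  have hmono : Function.Injective (ι.f 0) := by
    rw [← LinearMap.ker_eq_bot (f := (ι.f 0).hom)]
    ext m
    simp only [LinearMap.mem_ker, Submodule.mem_bot]
    constructor
    · intro hm
      obtain ⟨x, rfl⟩ := hρsurj m
      have h1 : T.d 0 1 x = 0 := by rw [← hιρ x]; exact hm
      have h2 : x ∈ LinearMap.ker (T.d 0 1).hom := h1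
      rw [← hTex (-1) 0 1 (by omega) (by omega), ← hρker] at h2
      exact h2
    · intro hm; rw [hm, map_zero]
  have hrange : LinearMap.range (ι.f 0).hom = LinearMap.ker ((T⟦(1 : ℤ)⟧).d 0 (0 + 1)).hom := by
    have e1 : LinearMap.range (ι.f 0).hom = LinearMap.range (T.d 0 1).hom := by
      ext b
      simp only [LinearMap.mem_range]
      constructor
      · rintro ⟨m, rfl⟩
        obtain ⟨x, rfl⟩ := hρsurj m
        exact ⟨x, (hιρ x).symm⟩
      · rintro ⟨x, rfl⟩
        exact ⟨ρ x, hιρ x⟩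
    rw [e1, shift_ker T 1 0 (0 + 1)]
    have : LinearMap.ker (T.d (0 + 1) (0 + 1 + 1)).hom = LinearMap.ker (T.d 1 2).hom := rfl
    rw [this]
    exact hTex 0 1 2 rfl rfl
  constructor
  · -- injectivity
    intro g₁ g₂ h12
    obtain ⟨a, ha⟩ :=
      (HomotopyCategory.quotient (ModuleCat.{u} R) (ComplexShape.up ℤ)).map_surjective g₁
    obtain ⟨b, hb⟩ :=
      (HomotopyCategory.quotient (ModuleCat.{u} R) (ComplexShape.up ℤ)).map_surjective g₂
    dsimp only at h12
    rw [← ha, ← hb, ← Functor.map_comp, ← Functor.map_comp] at h12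
    have hhom : Homotopy (ι ≫ a) (ι ≫ b) := HomotopyCategory.homotopyOfEq _ _ h12
    have hsub : Homotopy (ι ≫ (a - b)) 0 := by
      refine (Homotopy.ofEq ?_).trans (Homotopy.equivSubZero hhom)
      rw [Preadditive.comp_sub]
    obtain ⟨habz⟩ := homotopy_zero (T⟦(1 : ℤ)⟧) (I⟦n⟧) M ι hexA hexB hprojA hinjB hM
      hmono hrange (a - b) hsub
    have : Homotopy a b := Homotopy.equivSubZero.symm habz
    rw [← ha, ← hb]
    exact HomotopyCategory.eq_of_homotopy _ _ this
  · -- surjectivity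
    intro ψ
    obtain ⟨f, hf⟩ :=
      (HomotopyCategory.quotient (ModuleCat.{u} R) (ComplexShape.up ℤ)).map_surjective ψ
    obtain ⟨g, hg⟩ := exists_chainMap_lift (T⟦(1 : ℤ)⟧) (I⟦n⟧) M ι hexA hexB hprojA hinjB hM
      hmono hrange f
    refine ⟨(HomotopyCategory.quotient (ModuleCat.{u} R) (ComplexShape.up ℤ)).map g, ?_⟩
    dsimp only
    rw [← Functor.map_comp, hg, hf]
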